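/- With the notation of the Ostrowski expansion, if b_ℓ ≥ 1 then 1 − |ε_ℓ(N)| ≥ c/a_{ℓ+2} for an absolute constant c > 0; moreover if additionally b_{ℓ+1} ≤ a_{ℓ+2}/2, then 1 − |ε_ℓ(N)| ≥ c' for an absolute constant c' > 0. -/

import Mathlib

open Real Filter MeasureTheory

/-- Gauss map -/
noncomputable def gaussMap (x : ℝ) : ℝ := Int.fract x⁻¹

/-- Continued fraction partial quotients of α ∈ (0,1): `cfA α k` is `a_k` for `k ≥ 1`. -/
noncomputable def cfA (α : ℝ) : ℕ → ℕ
  | 0 => 0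
  | n + 1 => (⌊(gaussMap^[n] α)⁻¹⌋).toNat

/-- Denominators of the convergents: `q_0 = 1`, `q_1 = a_1`, `q_{k+2} = a_{k+2} q_{k+1} + q_k`. -/
noncomputable def cfQ (α : ℝ) : ℕ → ℕ
  | 0 => 1
  | 1 => cfA α 1
  | n + 2 => cfA α (n + 2) * cfQ α (n + 1) + cfQ α n

/-- Numerators of the convergents. -/
noncomputable def cfP (α : ℝ) : ℕ → ℤ
  | 0 => 0
  | 1 => 1
  | n + 2 => cfA α (n + 2) * cfP α (n + 1) + cfP α n

/-- `δ_k = |q_k α - p_k| = ‖q_k α‖`. -/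
noncomputable def cfDelta (α : ℝ) (k : ℕ) : ℝ := |(cfQ α k : ℝ) * α - (cfP α k : ℝ)|

/-- Sudler product `P_N(α) = ∏_{r=1}^N |2 sin(π r α)|`. -/
noncomputable def sudler (α : ℝ) (N : ℕ) : ℝ :=
  ∏ r ∈ Finset.Icc 1 N, |2 * Real.sin (Real.pi * r * α)|

/-- Ostrowski digit conditions for a digit sequence `b` of length `K` w.r.t. `α`. -/
def IsOstrowski (α : ℝ) (K : ℕ) (b : ℕ → ℕ) (N : ℕ) : Prop :=
  N = ∑ ℓ ∈ Finset.range K, b ℓ * cfQ α ℓ ∧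
  (∀ ℓ < K, b ℓ ≤ cfA α (ℓ + 1)) ∧
  b 0 < cfA α 1 ∧
  (∀ ℓ, 1 ≤ ℓ → ℓ < K → b ℓ = cfA α (ℓ + 1) → b (ℓ - 1) = 0)

/-- `ε_ℓ(N) = q_ℓ ∑_{k=ℓ+1}^{K-1} (-1)^{k+ℓ} b_k δ_k`. -/
noncomputable def cfEps (α : ℝ) (K : ℕ) (b : ℕ → ℕ) (ℓ : ℕ) : ℝ :=
  (cfQ α ℓ : ℝ) * ∑ k ∈ Finset.Ico (ℓ + 1) K, (-1 : ℝ) ^ (k + ℓ) * (b k : ℝ) * cfDelta α k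
-- auxiliary
noncomputable def alphaSeq (α : ℝ) (n : ℕ) : ℝ := gaussMap^[n] α

noncomputable def betaSeq (α : ℝ) : ℕ → ℝ
  | 0 => α
  | n + 1 => betaSeq α n * alphaSeq α (n + 1)

section main
variable {α : ℝ} (hα : α ∈ Set.Ioo (0:ℝ) 1) (hirr : Irrational α)

include hα hirr

lemma alphaSeq_mem : ∀ n, alphaSeq α n ∈ Set.Ioo (0:ℝ) 1 ∧ Irrational (alphaSeq α n) := by
  intro n
  induction n with
  | zero => exact ⟨hα, hirr⟩
  | succ n ih =>
    obtain ⟨⟨h0, h1⟩, hir⟩ := ih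
    have hx : alphaSeq α (n+1) = Int.fract (alphaSeq α n)⁻¹ := by
      simp only [alphaSeq, Function.iterate_succ_apply']; rfl
    have hinv : Irrational (alphaSeq α n)⁻¹ := hir.inv
    have hfr : Irrational (Int.fract (alphaSeq α n)⁻¹) := by
      rw [Int.fract]; exact Irrational.sub_intCast hinv _
    refine ⟨⟨?_, ?_⟩, hx ▸ hfr⟩
    · rw [hx]
      rcases lt_or_eq_of_le (Int.fract_nonneg ((alphaSeq α n)⁻¹)) with h | h
      · exact h
      · exact absurd (h ▸ hfr) (by simp [Rat.not_irrational])
    · rw [hx]; exact Int.fract_lt_one _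

include hα hirr

lemma alphaSeq_pos (n : ℕ) : 0 < alphaSeq α n := (alphaSeq_mem hα hirr n).1.1
lemma alphaSeq_lt_one (n : ℕ) : alphaSeq α n < 1 := (alphaSeq_mem hα hirr n).1.2

lemma cfA_cast (n : ℕ) : (cfA α (n+1) : ℤ) = ⌊(alphaSeq α n)⁻¹⌋ := by
  have h1 : (1:ℝ) < (alphaSeq α n)⁻¹ :=
    (one_lt_inv₀ (alphaSeq_pos hα hirr n)).2 (alphaSeq_lt_one hα hirr n)
  have : (1:ℤ) ≤ ⌊(alphaSeq α n)⁻¹⌋ := by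
    exact_mod_cast Int.le_floor.2 (by exact_mod_cast h1.le)
  have h0 : (0:ℤ) ≤ ⌊(gaussMap^[n] α)⁻¹⌋ := le_trans zero_le_one this
  simp [cfA, Int.toNat_of_nonneg h0]; rfl

lemma one_le_cfA (n : ℕ) : 1 ≤ cfA α (n+1) := by
  have h1 : (1:ℝ) < (alphaSeq α n)⁻¹ :=
    (one_lt_inv₀ (alphaSeq_pos hα hirr n)).2 (alphaSeq_lt_one hα hirr n)
  have : (1:ℤ) ≤ ⌊(alphaSeq α n)⁻¹⌋ := Int.le_floor.2 (by exact_mod_cast h1.le)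
  have h2 := cfA_cast hα hirr n
  omega

lemma alphaSeq_succ_eq (n : ℕ) :
    alphaSeq α (n+1) = (alphaSeq α n)⁻¹ - (cfA α (n+1) : ℝ) := by
  have hx : alphaSeq α (n+1) = Int.fract (alphaSeq α n)⁻¹ := by
    simp only [alphaSeq, Function.iterate_succ_apply']; rfl
  rw [hx, Int.fract]
  have := cfA_cast hα hirr n
  push_cast [← this]
  ring

lemma alpha_mul (n : ℕ) :
    alphaSeq α n * alphaSeq α (n+1) = 1 - (cfA α (n+1) : ℝ) * alphaSeq α n := by
  have h := alphaSeq_succ_eq hα hirr n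
  have hne : alphaSeq α n ≠ 0 := ne_of_gt (alphaSeq_pos hα hirr n)
  rw [h]
  field_simp

lemma betaSeq_pos (n : ℕ) : 0 < betaSeq α n := by
  induction n with
  | zero => exact hα.1
  | succ n ih => exact mul_pos ih (alphaSeq_pos hα hirr (n+1))

lemma betaSeq_succ_lt (n : ℕ) : betaSeq α (n+1) < betaSeq α n := by
  have := betaSeq_pos hα hirr n
  have h1 := alphaSeq_lt_one hα hirr (n+1)
  have h0 := alphaSeq_pos hα hirr (n+1)
  calc betaSeq α (n+1) = betaSeq α n * alphaSeq α (n+1) := rfl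
  _ < betaSeq α n * 1 := by nlinarith
  _ = betaSeq α n := mul_one _

lemma beta_rec0 : (cfA α 1 : ℝ) * betaSeq α 0 + betaSeq α 1 = 1 := by
  have h := alpha_mul hα hirr 0
  have : betaSeq α 1 = alphaSeq α 0 * alphaSeq α 1 := by
    simp [betaSeq, alphaSeq]
  rw [this, h]
  have : betaSeq α 0 = alphaSeq α 0 := rfl
  rw [this]; ring

lemma beta_rec (n : ℕ) :
    betaSeq α n = (cfA α (n+2) : ℝ) * betaSeq α (n+1) + betaSeq α (n+2) := by
  have h := alpha_mul hα hirr (n+1)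
  have e2 : betaSeq α (n+2) = betaSeq α n * (alphaSeq α (n+1) * alphaSeq α (n+2)) := by
    show betaSeq α (n+1) * alphaSeq α (n+2) = _
    show betaSeq α n * alphaSeq α (n+1) * alphaSeq α (n+2) = _
    ring
  rw [e2, h]
  show betaSeq α n = (cfA α (n+2):ℝ) * (betaSeq α n * alphaSeq α (n+1)) + _
  ring

lemma cfQ_pos (n : ℕ) : 0 < cfQ α n := by
  have h1 := one_le_cfA hα hirr 0
  induction n using Nat.strong_induction_on with
  | _ n ih =>
    match n with
    | 0 => simp [cfQ]
    | 1 => show 0 < cfA α 1; exact h1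
    | (m+2) =>
      have := ih (m+1) (by omega)
      have := ih m (by omega)
      simp only [cfQ]
      positivity

lemma cfQ_mono (n : ℕ) : cfQ α n ≤ cfQ α (n+1) := by
  match n with
  | 0 => simpa [cfQ] using one_le_cfA hα hirr 0
  | (m+1) =>
    have h1 := one_le_cfA hα hirr (m+1)
    have h2 := cfQ_pos hα hirr (m+1)
    have h3 := cfQ_pos hα hirr m
    calc cfQ α (m+1) ≤ cfA α (m+2) * cfQ α (m+1) + cfQ α m := by nlinarith
    _ = cfQ α (m+2) := rfl

lemma qp_identity (n : ℕ) :
    (cfQ α n : ℝ) * α - (cfP α n : ℝ) = (-1)^n * betaSeq α n := by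
  induction n using Nat.strong_induction_on with
  | _ n ih =>
    match n with
    | 0 => simp [cfQ, cfP, betaSeq]
    | 1 =>
      have h := beta_rec0 hα hirr
      have : betaSeq α 0 = α := rfl
      simp only [cfQ, cfP, pow_one]
      push_cast
      linarith [h, this ▸ h]
    | (m+2) =>
      have ih1 := ih (m+1) (by omega)
      have ih0 := ih m (by omega)
      have hrec := beta_rec hα hirr m
      simp only [cfQ, cfP]
      push_cast
      have : ((cfA α (m+2) : ℝ) * (cfQ α (m+1):ℝ) + (cfQ α m:ℝ)) * α -
          ((cfA α (m+2):ℝ) * (cfP α (m+1):ℝ) + (cfP α m:ℝ))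
          = (cfA α (m+2):ℝ) * ((cfQ α (m+1):ℝ) * α - (cfP α (m+1):ℝ))
            + ((cfQ α m:ℝ) * α - (cfP α m:ℝ)) := by ring
      rw [this, ih1, ih0]
      rw [show betaSeq α (m+2) = betaSeq α m - (cfA α (m+2):ℝ) * betaSeq α (m+1) by linarith]
      ring

lemma cfDelta_eq_beta (n : ℕ) : cfDelta α n = betaSeq α n := by
  rw [cfDelta, qp_identity hα hirr n, abs_mul, abs_pow, abs_neg, abs_one, one_pow, one_mul,
    abs_of_pos (betaSeq_pos hα hirr n)]

lemma qbeta (n : ℕ) :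
    (cfQ α (n+1) : ℝ) * betaSeq α n + (cfQ α n : ℝ) * betaSeq α (n+1) = 1 := by
  induction n with
  | zero =>
    have := beta_rec0 hα hirr
    simp only [cfQ]
    push_cast
    linarith
  | succ n ih =>
    have hrec := beta_rec hα hirr n
    show ((cfQ α (n+2) : ℕ) : ℝ) * _ + _ = 1
    rw [show cfQ α (n+2) = cfA α (n+2) * cfQ α (n+1) + cfQ α n from rfl]
    push_cast
    nlinarith [hrec, ih]

lemma two_mul_le {ℓ : ℕ} (h : 2 ≤ cfA α (ℓ+1)) : 2 * cfQ α ℓ ≤ cfQ α (ℓ+1) := by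
  match ℓ with
  | 0 => simpa [cfQ] using h
  | (m+1) =>
    have h2 := cfQ_pos hα hirr (m+1)
    have h3 := cfQ_pos hα hirr m
    calc 2 * cfQ α (m+1) ≤ cfA α (m+2) * cfQ α (m+1) + cfQ α m := by nlinarith
    _ = cfQ α (m+2) := rfl

lemma le_two_mul {ℓ : ℕ} (h : cfA α (ℓ+1) = 1) : cfQ α (ℓ+1) ≤ 2 * cfQ α ℓ := by
  match ℓ with
  | 0 => simp [cfQ, h]
  | (m+1) =>
    have h4 := cfQ_mono hα hirr m
    calc cfQ α (m+2) = cfA α (m+2) * cfQ α (m+1) + cfQ α m := rfl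
    _ = cfQ α (m+1) + cfQ α m := by rw [h]; ring
    _ ≤ 2 * cfQ α (m+1) := by omega

lemma tail_bound (K : ℕ) (b : ℕ → ℕ) (hb : ∀ k, k < K → (b k : ℝ) ≤ (cfA α (k+1) : ℝ)) :
    ∀ n m, K - m ≤ n →
      -(betaSeq α m) ≤ (∑ k ∈ Finset.Ico m K, (-1:ℝ)^(k+m) * (b k : ℝ) * betaSeq α k) ∧
      (∑ k ∈ Finset.Ico m K, (-1:ℝ)^(k+m) * (b k : ℝ) * betaSeq α k)
        ≤ (b m : ℝ) * betaSeq α m + betaSeq α (m+1) := by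
  intro n
  induction n with
  | zero =>
    intro m hm
    rw [Finset.Ico_eq_empty (by omega)]
    simp only [Finset.sum_empty]
    constructor
    · linarith [betaSeq_pos hα hirr m]
    · exact add_nonneg (mul_nonneg (Nat.cast_nonneg _) (betaSeq_pos hα hirr m).le)
        (betaSeq_pos hα hirr (m+1)).le
  | succ n ih =>
    intro m hm
    by_cases hmK : m < K
    · have hsplit := Finset.sum_eq_sum_Ico_succ_bot hmK
        (fun k => (-1:ℝ)^(k+m) * (b k : ℝ) * betaSeq α k)
      have hneg : (∑ k ∈ Finset.Ico (m+1) K, (-1:ℝ)^(k+m) * (b k : ℝ) * betaSeq α k)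
          = -(∑ k ∈ Finset.Ico (m+1) K, (-1:ℝ)^(k+(m+1)) * (b k : ℝ) * betaSeq α k) := by
        rw [← Finset.sum_neg_distrib]
        refine Finset.sum_congr rfl fun k _ => ?_
        have hk : k + (m+1) = (k+m) + 1 := by omega
        rw [hk, pow_succ]
        ring
      have ihm := ih (m+1) (by omega)
      have hb0 : (0:ℝ) ≤ (b m : ℝ) := Nat.cast_nonneg _
      have hbm : (0:ℝ) ≤ (b m : ℝ) * betaSeq α m :=
        mul_nonneg hb0 (betaSeq_pos hα hirr m).le
      have hself : (-1:ℝ)^(m+m) = 1 := by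
        rw [show m + m = 2*m by omega, pow_mul]; norm_num
      rw [hsplit, hneg, hself, one_mul]
      constructor
      · -- lower bound: need upper bound on inner sum
        by_cases h2 : m + 1 < K
        · have hbb := hb (m+1) h2
          have hrec := beta_rec hα hirr m
          have hA := (ihm).2
          have hbp := betaSeq_pos hα hirr (m+1)
          nlinarith
        · rw [Finset.Ico_eq_empty h2]
          simp only [Finset.sum_empty]
          linarith [betaSeq_pos hα hirr m]
      · linarith [ihm.1]
    · rw [Finset.Ico_eq_empty (by omega)]
      simp only [Finset.sum_empty]
      exact ⟨by linarith [betaSeq_pos hα hirr m],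
        add_nonneg (mul_nonneg (Nat.cast_nonneg _) (betaSeq_pos hα hirr m).le)
          (betaSeq_pos hα hirr (m+1)).le⟩

end main

set_option maxHeartbeats 1600000 in
lemma final_arith (A Q0 Q1 Q2 B0 B1 B2 U bb : ℝ)
    (hA1 : 1 ≤ A)
    (hUlow : -B1 ≤ U) (hUhigh : U ≤ bb * B1 + B2)
    (hrec : B0 = A * B1 + B2) (hq01 : Q1 * B0 + Q0 * B1 = 1)
    (hq12 : Q2 * B1 + Q1 * B2 = 1)
    (hB0p : 0 < B0) (hB1p : 0 < B1) (hB2p : 0 < B2) (hB12 : B2 < B1)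
    (hQ0p : 0 < Q0) (hQ1p : 0 < Q1) (hQ01 : Q0 ≤ Q1) (hQ2e : Q2 = A * Q1 + Q0)
    (hbb0 : 0 ≤ bb) (hbA : bb ≤ A) (hble : bb ≤ A - 1)
    (hq2 : 2 * Q0 ≤ Q1 ∨ Q1 ≤ 2 * Q0) :
    (1/6)/A ≤ 1 - Q0 * |U| ∧ (bb ≤ A/2 → 1/12 ≤ 1 - Q0 * |U|) := by
  have hApos : (0:ℝ) < A := lt_of_lt_of_le one_pos hA1
  have hF3 : 1 < (Q1 + Q2) * B1 := by nlinarith [mul_pos hQ1p (sub_pos.2 hB12)]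
  have hQ1B1 : 1 < (A + 2) * (Q1 * B1) := by nlinarith [mul_pos hQ1p hB1p, hB1p]
  have hM1 : (1:ℝ)/3 ≤ 1 - Q0 * B1 := by
    nlinarith [mul_nonneg (mul_pos hQ1p hB1p).le (by linarith : (0:ℝ) ≤ 2*A - 2),
      mul_pos hQ1p hB2p, mul_pos hQ1p hB1p]
  rcases abs_cases U with ⟨hUe, hU0⟩ | ⟨hUe, hU0⟩
  · -- positive case
    rw [hUe]
    rcases hq2 with h2q | h2q
    · have hhalf : Q0 * B0 ≤ 1/2 := by
        nlinarith [mul_nonneg (sub_nonneg.2 h2q) hB0p.le, mul_pos hQ0p hB1p]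
      have hUB0 : U ≤ B0 := by nlinarith [mul_le_mul_of_nonneg_right hbA hB1p.le]
      have hZ : 1/2 ≤ 1 - Q0 * U := by
        nlinarith [mul_le_mul_of_nonneg_left hUB0 hQ0p.le]
      constructor
      · rw [div_le_iff₀ hApos]; nlinarith
      · intro _; linarith
    · have h1mQ0B0 : Q0 * B1 ≤ 1 - Q0 * B0 := by
        nlinarith [mul_nonneg (sub_nonneg.2 hQ01) hB0p.le]
      constructor
      · have hU' : U ≤ B0 - B1 := by
          nlinarith [mul_le_mul_of_nonneg_right hble hB1p.le]
        have hZt : Q1 * B1 ≤ 1 - Q0 * U := by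
          nlinarith [mul_le_mul_of_nonneg_left hU' hQ0p.le,
            mul_nonneg (sub_nonneg.2 h2q) hB1p.le]
        rw [div_le_iff₀ hApos]
        nlinarith [mul_nonneg (mul_pos hQ1p hB1p).le (by linarith : (0:ℝ) ≤ 5*A - 2),
          mul_nonneg (sub_nonneg.2 hZt) hApos.le]
      · intro hb2
        have hU' : U ≤ B0 - (A/2) * B1 := by
          nlinarith [mul_le_mul_of_nonneg_right hb2 hB1p.le]
        have hZt : (A/2) * (Q0 * B1) ≤ 1 - Q0 * U := by
          nlinarith [mul_le_mul_of_nonneg_left hU' hQ0p.le]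
        have hQ0B1 : Q1 * B1 ≤ 2 * (Q0 * B1) := by
          nlinarith [mul_nonneg (sub_nonneg.2 h2q) hB1p.le]
        nlinarith [mul_nonneg (mul_pos hQ1p hB1p).le (by linarith : (0:ℝ) ≤ 2*A - 2),
          mul_le_mul_of_nonneg_left hQ0B1 (by linarith : (0:ℝ) ≤ A/4)]
  · -- negative case
    rw [hUe]
    have hZ : 1/3 ≤ 1 - Q0 * (-U) := by
      have : Q0 * (-U) ≤ Q0 * B1 := mul_le_mul_of_nonneg_left (by linarith) hQ0p.le
      linarith
    constructor
    · rw [div_le_iff₀ hApos]; nlinarith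
    · intro _; linarith

theorem eps_away_from_singularity :
    ∃ c : ℝ, 0 < c ∧ ∃ c' : ℝ, 0 < c' ∧
    ∀ α : ℝ, α ∈ Set.Ioo (0:ℝ) 1 → Irrational α →
    ∀ K N : ℕ, ∀ b : ℕ → ℕ, IsOstrowski α K b N →
    ∀ ℓ < K, 1 ≤ b ℓ →
      c / (cfA α (ℓ+2) : ℝ) ≤ 1 - |cfEps α K b ℓ| ∧
      ((b (ℓ+1) : ℝ) ≤ (cfA α (ℓ+2) : ℝ) / 2 → c' ≤ 1 - |cfEps α K b ℓ|) := by
  refine ⟨1/6, by norm_num, 1/12, by norm_num, ?_⟩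
  intro α hα hirr K N b ho ℓ hℓ hbℓ
  obtain ⟨-, hdig, -, hrule⟩ := ho
  set U : ℝ := ∑ k ∈ Finset.Ico (ℓ+1) K, (-1:ℝ)^(k+(ℓ+1)) * (b k : ℝ) * betaSeq α k with hUdef
  have hA1 : (1:ℝ) ≤ (cfA α (ℓ+2) : ℝ) := by exact_mod_cast one_le_cfA hα hirr (ℓ+1)
  have hApos : (0:ℝ) < (cfA α (ℓ+2) : ℝ) := lt_of_lt_of_le one_pos hA1
  -- |cfEps| = Q0 * |U|
  have hEps : |cfEps α K b ℓ| = (cfQ α ℓ : ℝ) * |U| := by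
    rw [cfEps]
    have h1 : ∑ k ∈ Finset.Ico (ℓ+1) K, (-1:ℝ)^(k+ℓ) * (b k : ℝ) * cfDelta α k = -U := by
      rw [hUdef, ← Finset.sum_neg_distrib]
      refine Finset.sum_congr rfl fun k _ => ?_
      rw [cfDelta_eq_beta hα hirr k, show k + (ℓ+1) = (k+ℓ)+1 by omega, pow_succ]
      ring
    rw [h1, abs_mul, abs_neg, abs_of_nonneg (Nat.cast_nonneg _)]
  have hbounds := tail_bound hα hirr K b
    (fun k hk => by exact_mod_cast hdig k hk) (K - (ℓ+1)) (ℓ+1) le_rfl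
  have hq2 : 2 * (cfQ α ℓ : ℝ) ≤ (cfQ α (ℓ+1) : ℝ) ∨
      (cfQ α (ℓ+1) : ℝ) ≤ 2 * (cfQ α ℓ : ℝ) := by
    by_cases h2A : 2 ≤ cfA α (ℓ+1)
    · exact Or.inl (by exact_mod_cast two_mul_le hα hirr h2A)
    · have hA1eq : cfA α (ℓ+1) = 1 := by have := one_le_cfA hα hirr ℓ; omega
      exact Or.inr (by exact_mod_cast le_two_mul hα hirr hA1eq)
  rw [hEps]
  have hQ2e : (cfQ α (ℓ+2) : ℝ) = (cfA α (ℓ+2) : ℝ) * (cfQ α (ℓ+1) : ℝ) + (cfQ α ℓ : ℝ) := by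
    rw [show cfQ α (ℓ+2) = cfA α (ℓ+2) * cfQ α (ℓ+1) + cfQ α ℓ from rfl]
    push_cast; ring
  by_cases hK1 : ℓ + 1 < K
  · have hble : (b (ℓ+1) : ℝ) ≤ (cfA α (ℓ+2) : ℝ) - 1 := by
      have h2 : b (ℓ+1) ≠ cfA α (ℓ+2) := by
        intro h
        have := hrule (ℓ+1) (by omega) hK1 h
        simp only [Nat.add_sub_cancel] at this
        omega
      have h3 : b (ℓ+1) + 1 ≤ cfA α (ℓ+2) := by
        have h5 := hdig (ℓ+1) hK1
        rw [show ℓ+1+1 = ℓ+2 by omega] at h5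
        omega
      have h4 : ((b (ℓ+1) + 1 : ℕ) : ℝ) ≤ (cfA α (ℓ+2) : ℝ) := by exact_mod_cast h3
      push_cast at h4; linarith
    exact final_arith _ _ _ _ _ _ _ _ _ hA1 hbounds.1 hbounds.2
      (beta_rec hα hirr ℓ) (qbeta hα hirr ℓ) (qbeta hα hirr (ℓ+1))
      (betaSeq_pos hα hirr ℓ) (betaSeq_pos hα hirr (ℓ+1)) (betaSeq_pos hα hirr (ℓ+2))
      (betaSeq_succ_lt hα hirr (ℓ+1))
      (by exact_mod_cast cfQ_pos hα hirr ℓ) (by exact_mod_cast cfQ_pos hα hirr (ℓ+1))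
      (by exact_mod_cast cfQ_mono hα hirr ℓ) hQ2e
      (Nat.cast_nonneg _) (by linarith) hble hq2
  · have hU0 : U = 0 := by
      rw [hUdef, Finset.Ico_eq_empty hK1, Finset.sum_empty]
    have := final_arith (cfA α (ℓ+2) : ℝ) (cfQ α ℓ : ℝ) (cfQ α (ℓ+1) : ℝ) (cfQ α (ℓ+2) : ℝ)
      (betaSeq α ℓ) (betaSeq α (ℓ+1)) (betaSeq α (ℓ+2)) U 0
      hA1 hbounds.1 (by rw [hU0, zero_mul, zero_add]; exact (betaSeq_pos hα hirr (ℓ+2)).le)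
      (beta_rec hα hirr ℓ) (qbeta hα hirr ℓ) (qbeta hα hirr (ℓ+1))
      (betaSeq_pos hα hirr ℓ) (betaSeq_pos hα hirr (ℓ+1)) (betaSeq_pos hα hirr (ℓ+2))
      (betaSeq_succ_lt hα hirr (ℓ+1))
      (by exact_mod_cast cfQ_pos hα hirr ℓ) (by exact_mod_cast cfQ_pos hα hirr (ℓ+1))
      (by exact_mod_cast cfQ_mono hα hirr ℓ) hQ2e
      le_rfl (by linarith) (by linarith) hq2
    exact ⟨this.1, fun _ => this.2 (by linarith)⟩
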